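/- Fix λ > 0 and p > 1, and set I = λ^q where q = p/(p−1) is the conjugate exponent of p. Then (α, ψ) is a positive solution of the constrained problem (P)_λ if and only if (γ, v) := (λ^{1/(p−1)} α, λ^{1/(p−1)}(α + λψ)) is a positive solution of the free boundary problem (F)_I, i.e. −Δv = (v)_+^p in Ω, v = γ > 0 on ∂Ω, and −∫_{∂Ω} ∂v/∂ν = I. -/

import Mathlib

open MeasureTheory Real Bornology Set

noncomputable section

/-- Euclidean space ℝ^N. -/
abbrev EN (N : ℕ) := EuclideanSpace ℝ (Fin N)

/-- The Laplacian, as the sum of second derivatives in the coordinate directions. -/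
def lap {N : ℕ} (f : EN N → ℝ) (x : EN N) : ℝ :=
  ∑ i : Fin N, iteratedFDeriv ℝ 2 f x ![EuclideanSpace.single i 1, EuclideanSpace.single i 1]

/-- The average of `η` over `Ω` with respect to the weight `w`. -/
def wavg {N : ℕ} (Ω : Set (EN N)) (w η : EN N → ℝ) : ℝ :=
  (∫ x in Ω, w x * η x) / ∫ x in Ω, w x

/-- Dirichlet energy ∫_Ω |∇φ|². -/
def dirE {N : ℕ} (Ω : Set (EN N)) (φ : EN N → ℝ) : ℝ := ∫ x in Ω, ‖fderiv ℝ φ x‖ ^ 2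

/-- Admissible (nontrivial) test functions: a smooth proxy for H¹₀(Ω) ∖ {0}. -/
def testfun {N : ℕ} (Ω : Set (EN N)) (φ : EN N → ℝ) : Prop :=
  ContDiff ℝ 2 φ ∧ (∀ x ∉ Ω, φ x = 0) ∧ ∃ x ∈ Ω, φ x ≠ 0

lemma key1d {φ φ' : ℝ → ℝ} {L : ℝ} (hc : Continuous φ)
    (hd : ∀ t, HasDerivAt φ (φ' t) t) (hd2 : HasDerivAt φ' L 0)
    (hmin : IsLocalMin φ 0) : 0 ≤ L := by
  by_contra hcon
  push_neg at hcon
  have hφ'0 : φ' 0 = 0 := by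
    have := hmin.deriv_eq_zero
    rwa [(hd 0).deriv] at this
  have h1 : ∀ᶠ t in nhdsWithin (0:ℝ) {(0:ℝ)}ᶜ, slope φ' 0 t < 0 := by
    rw [hasDerivAt_iff_tendsto_slope] at hd2
    exact hd2.eventually_lt_const hcon
  rw [eventually_nhdsWithin_iff] at h1
  have h2 := h1.and hmin
  rw [Metric.eventually_nhds_iff] at h2
  obtain ⟨ε, hε, hball⟩ := h2
  have hneg : ∀ t, 0 < t → t < ε → φ' t < 0 := by
    intro t ht hte
    have hd : dist t 0 < ε := by
      rw [Real.dist_eq, sub_zero, abs_of_pos ht]; exact hte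
    have := (hball hd).1 (by simpa using ne_of_gt ht)
    rw [slope_def_field, hφ'0, sub_zero, sub_zero] at this
    have := mul_neg_of_neg_of_pos this ht
    rwa [div_mul_cancel₀ _ (ne_of_gt ht)] at this
  have hanti : StrictAntiOn φ (Icc 0 (ε/2)) := by
    apply strictAntiOn_of_deriv_neg (convex_Icc _ _) hc.continuousOn
    intro t ht
    rw [interior_Icc] at ht
    rw [(hd t).deriv]
    exact hneg t ht.1 (by linarith [ht.2])
  have hlt : φ (ε/4) < φ 0 :=
    hanti ⟨le_refl _, by linarith⟩ ⟨by linarith, by linarith⟩ (by linarith)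
  have hge : φ 0 ≤ φ (ε/4) := by
    have hd : dist (ε/4) (0:ℝ) < ε := by
      rw [Real.dist_eq, sub_zero, abs_of_pos (by linarith)]; linarith
    exact (hball hd).2
  linarith

lemma second_nonneg_of_isLocalMin {N : ℕ} {f : EN N → ℝ} (hf : ContDiff ℝ 2 f)
    {x : EN N} (hmin : IsLocalMin f x) (u : EN N) :
    0 ≤ iteratedFDeriv ℝ 2 f x ![u, u] := by
  have hline : ∀ t : ℝ, HasDerivAt (fun s : ℝ => x + s • u) u t := fun t => by
    simpa using ((hasDerivAt_id t).smul_const u).const_add x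
  have hfd : Differentiable ℝ f := hf.differentiable (by norm_num)
  have hφd : ∀ t, HasDerivAt (fun s : ℝ => f (x + s • u)) (fderiv ℝ f (x + t • u) u) t :=
    fun t => (hfd _).hasFDerivAt.comp_hasDerivAt t (hline t)
  have hf' : ContDiff ℝ 1 (fderiv ℝ f) := hf.fderiv_right (by norm_num)
  have h1 : HasFDerivAt (fderiv ℝ f) (fderiv ℝ (fderiv ℝ f) x) x :=
    ((hf'.differentiable (by norm_num)) x).hasFDerivAt
  have h2 : HasDerivAt (fun t : ℝ => fderiv ℝ f (x + t • u)) (fderiv ℝ (fderiv ℝ f) x u) 0 := by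
    have h1' : HasFDerivAt (fderiv ℝ f) (fderiv ℝ (fderiv ℝ f) x) ((fun s : ℝ => x + s • u) 0) := by
      simpa using h1
    have h3 := h1'.comp_hasDerivAt (0:ℝ) (hline 0)
    exact h3
  have hφ2 : HasDerivAt (fun t : ℝ => fderiv ℝ f (x + t • u) u)
      (fderiv ℝ (fderiv ℝ f) x u u) 0 := by
    have := h2.clm_apply (hasDerivAt_const 0 u)
    simpa using this
  have hminφ : IsLocalMin (fun s : ℝ => f (x + s • u)) 0 := by
    have hg : Continuous (fun s : ℝ => x + s • u) :=
      continuous_const.add (continuous_id.smul continuous_const)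
    have h4 : IsLocalMin (f ∘ fun s : ℝ => x + s • u) 0 := by
      apply IsLocalMin.comp_continuous (g := fun s : ℝ => x + s • u) _ hg.continuousAt
      simpa using hmin
    exact h4
  have := key1d (hf.continuous.comp (continuous_const.add (continuous_id.smul continuous_const)))
    hφd hφ2 hminφ
  rw [iteratedFDeriv_two_apply]
  simpa using this

lemma lap_nonneg_of_isLocalMin {N : ℕ} {f : EN N → ℝ} (hf : ContDiff ℝ 2 f)
    {x : EN N} (hmin : IsLocalMin f x) : 0 ≤ lap f x :=
  Finset.sum_nonneg fun i _ => second_nonneg_of_isLocalMin hf hmin _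

lemma lap_sq_coord {N : ℕ} (i₀ : Fin N) (x : EN N) :
    lap (fun y : EN N => (EuclideanSpace.proj i₀) y * (EuclideanSpace.proj i₀) y) x = 2 := by
  set l : EN N →L[ℝ] ℝ := EuclideanSpace.proj i₀ with hl
  set L : EN N →L[ℝ] (EN N →L[ℝ] ℝ) := (2:ℝ) • (l.smulRight l) with hL
  have hfd : ∀ z : EN N, HasFDerivAt (fun y => l y * l y) ((2 * l z) • l) z := by
    intro z
    have := (l.hasFDerivAt (x := z)).mul (l.hasFDerivAt (x := z))
    rw [show (2 * l z) • l = l z • l + l z • l by rw [two_mul, add_smul]]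
    exact this
  have hfderiv : fderiv ℝ (fun y => l y * l y) = fun z => L z := by
    funext z
    rw [(hfd z).fderiv]
    ext w
    simp [hL, smul_smul]
  have h2 : ∀ u : EN N,
      iteratedFDeriv ℝ 2 (fun y => l y * l y) x ![u, u] = 2 * (l u * l u) := by
    intro u
    rw [iteratedFDeriv_two_apply, hfderiv]
    have : fderiv ℝ (fun z => L z) x = L := L.fderiv
    rw [this]
    simp [hL, smul_smul]
    ring
  unfold lap
  rw [Finset.sum_congr rfl fun i _ => h2 _]
  have h3 : ∀ i : Fin N, l (EuclideanSpace.single i 1) = if i₀ = i then 1 else 0 := by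
    intro i
    simp [hl, EuclideanSpace.single_apply]
  rw [Finset.sum_congr rfl fun i _ => by rw [h3 i]]
  rw [Finset.sum_eq_single i₀]
  · simp
  · intro b _ hb
    simp [Ne.symm hb]
  · simp

lemma lap_add_smul {N : ℕ} {f g : EN N → ℝ} (hf : ContDiff ℝ 2 f) (hg : ContDiff ℝ 2 g)
    (b : ℝ) (x : EN N) :
    lap (fun y => f y + b * g y) x = lap f x + b * lap g x := by
  have h1 : (fun y => f y + b * g y) = f + b • g := by
    funext y; simp [Pi.add_apply, Pi.smul_apply, smul_eq_mul]
  have h2 : iteratedFDeriv ℝ 2 (fun y => f y + b * g y) x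
      = iteratedFDeriv ℝ 2 f x + b • iteratedFDeriv ℝ 2 g x := by
    rw [h1, iteratedFDeriv_add_apply (f := f) (g := b • g) hf.contDiffAt (hg.const_smul b).contDiffAt,
      iteratedFDeriv_const_smul_apply hg.contDiffAt]
  unfold lap
  rw [Finset.mul_sum, ← Finset.sum_add_distrib]
  refine Finset.sum_congr rfl fun i _ => ?_
  rw [h2]; simp

lemma weak_min {N : ℕ} (i₀ : Fin N) {Ω : Set (EN N)} (hΩo : IsOpen Ω) (hΩb : IsBounded Ω)
    {v : EN N → ℝ} (hv : ContDiff ℝ 2 v) {γ : ℝ}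
    (hsub : ∀ x ∈ Ω, lap v x ≤ 0) (hbd : ∀ x ∈ frontier Ω, v x = γ) :
    ∀ x ∈ Ω, γ ≤ v x := by
  intro x₀ hx₀
  set l : EN N →L[ℝ] ℝ := EuclideanSpace.proj i₀ with hl
  set h : EN N → ℝ := fun y => l y * l y with hh
  have hhc : ContDiff ℝ 2 h := l.contDiff.mul l.contDiff
  have hh0 : ∀ y, 0 ≤ h y := fun y => mul_self_nonneg _
  have hcpt : IsCompact (closure Ω) := hΩb.isCompact_closure
  obtain ⟨M, hM⟩ : ∃ M, ∀ y ∈ closure Ω, h y ≤ M := by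
    obtain ⟨M, hM⟩ := (hcpt.image_of_continuousOn hhc.continuous.continuousOn).bddAbove
    exact ⟨M, fun y hy => hM ⟨y, hy, rfl⟩⟩
  have hM0 : 0 ≤ M := le_trans (hh0 x₀) (hM x₀ (subset_closure hx₀))
  have key : ∀ ε : ℝ, 0 < ε → γ - ε * M ≤ v x₀ := by
    intro ε hε
    set w : EN N → ℝ := fun y => v y + (-ε) * h y with hw
    have hwc : Continuous w := hv.continuous.add (continuous_const.mul hhc.continuous)
    obtain ⟨y, hy, hymin⟩ :=
      hcpt.exists_isMinOn ⟨x₀, subset_closure hx₀⟩ hwc.continuousOn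
    have hymin' : ∀ z ∈ closure Ω, w y ≤ w z := isMinOn_iff.mp hymin
    have hyΩ : y ∉ Ω := by
      intro hyΩ
      have hlocal : IsLocalMin w y := by
        refine Filter.eventually_of_mem (hΩo.mem_nhds hyΩ) fun z hz => ?_
        exact hymin' z (subset_closure hz)
      have h0 := lap_nonneg_of_isLocalMin (hv.add (contDiff_const.mul hhc)) hlocal
      have hlw : lap w y = lap v y + (-ε) * 2 := by
        rw [hw, lap_add_smul hv hhc, hh, hl, lap_sq_coord]
      have := hsub y hyΩ
      rw [hlw] at h0
      linarith
    have hyfr : y ∈ frontier Ω := by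
      rw [frontier, hΩo.interior_eq]
      exact ⟨hy, hyΩ⟩
    have h5 : w y ≤ w x₀ := hymin' x₀ (subset_closure hx₀)
    have h6 : v y = γ := hbd y hyfr
    have h7 : h y ≤ M := hM y hy
    have h8 := hh0 x₀
    simp only [hw, h6] at h5 ⊢
    nlinarith
  by_contra hcon
  push_neg at hcon
  rcases eq_or_lt_of_le hM0 with hM0' | hM0'
  · have := key 1 one_pos
    rw [← hM0'] at this
    linarith
  · have hpos : 0 < (γ - v x₀) / (2 * M) := by
      apply div_pos (by linarith) (by linarith)
    have hk := key _ hpos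
    have heq : (γ - v x₀) / (2 * M) * M = (γ - v x₀) / 2 := by
      field_simp
    rw [heq] at hk
    linarith

lemma lap_const {N : ℕ} (c : ℝ) (x : EN N) : lap (fun _ : EN N => c) x = 0 := by
  unfold lap
  refine Finset.sum_eq_zero fun i _ => ?_
  rw [iteratedFDeriv_const_of_ne (by norm_num)]
  simp

/-- For `λ > 0`, `p > 1`, `I = λ^q` (`q` the conjugate exponent), `(α,ψ)` is a
positive solution of (P)_λ iff `(γ,v) = (λ^{1/(p-1)} α, λ^{1/(p-1)}(α + λψ))` is a positive
solution of the free boundary problem (F)_I.  The boundary flux `∫_{∂Ω} ∂v/∂ν` is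
represented by a functional `flux` satisfying the divergence theorem. -/
theorem stmt1 {N : ℕ} (Ω : Set (EN N)) (hΩo : IsOpen Ω) (hΩb : IsBounded Ω)
    (p q lam I : ℝ) (hp : 1 < p) (hq : 1 / p + 1 / q = 1) (hlam : 0 < lam)
    (hI : I = lam ^ q)
    (flux : (EN N → ℝ) → ℝ)
    (hdiv : ∀ f : EN N → ℝ, ContDiff ℝ 2 f → flux f = ∫ x in Ω, lap f x)
    (α : ℝ) (ψ : EN N → ℝ) (hψ : ContDiff ℝ 2 ψ) :
    (0 < α ∧ (∀ x ∈ Ω, -lap ψ x = (α + lam * ψ x) ^ p) ∧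
      (∫ x in Ω, (α + lam * ψ x) ^ p) = 1 ∧
      (∀ x ∈ Ω, 0 < ψ x) ∧ (∀ x ∈ frontier Ω, ψ x = 0))
    ↔
    (0 < lam ^ (1 / (p - 1)) * α ∧
      (∀ x ∈ Ω, -lap (fun y => lam ^ (1 / (p - 1)) * (α + lam * ψ y)) x
        = max (lam ^ (1 / (p - 1)) * (α + lam * ψ x)) 0 ^ p) ∧
      (∀ x ∈ frontier Ω, lam ^ (1 / (p - 1)) * (α + lam * ψ x)
        = lam ^ (1 / (p - 1)) * α) ∧
      -flux (fun y => lam ^ (1 / (p - 1)) * (α + lam * ψ y)) = I) := by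
  have hp1 : (0:ℝ) < p - 1 := by linarith
  have hp0 : p ≠ 0 := by positivity
  set c : ℝ := lam ^ (1 / (p - 1)) with hcdef
  have hc : 0 < c := rpow_pos_of_pos hlam _
  set V : EN N → ℝ := fun y => c * (α + lam * ψ y) with hVdef
  have hv2 : ContDiff ℝ 2 V :=
    contDiff_const.mul (contDiff_const.add (contDiff_const.mul hψ))
  -- exponent arithmetic
  have hq0 : q ≠ 0 := by
    intro h
    rw [h, div_zero, add_zero, div_eq_one_iff_eq hp0] at hq
    linarith
  have hqv : q = p / (p - 1) := by
    rw [eq_div_iff (ne_of_gt hp1)]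
    field_simp at hq
    nlinarith [hq]
  have hcl : c * lam = lam ^ q := by
    rw [hcdef, hqv]
    nth_rewrite 2 [show lam = lam ^ (1:ℝ) from (Real.rpow_one lam).symm]
    rw [← Real.rpow_add hlam]
    congr 1
    field_simp
    ring
  have hcp : c ^ p = lam ^ q := by
    rw [hcdef, ← Real.rpow_mul hlam.le, hqv]
    congr 1
    field_simp
  have hclp : c ^ p = c * lam := hcp.trans hcl.symm
  have hclam : 0 < c * lam := mul_pos hc hlam
  -- lap of V
  have hVeq : V = fun y => (c * α) + (c * lam) * ψ y := by
    funext y; rw [hVdef]; ring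
  have lapV : ∀ x, lap V x = (c * lam) * lap ψ x := by
    intro x
    rw [hVeq, lap_add_smul contDiff_const hψ, lap_const, zero_add]
  constructor
  · rintro ⟨hα, hpde, hint, hpos, hbd⟩
    have ht : ∀ x ∈ Ω, 0 < α + lam * ψ x := fun x hx =>
      add_pos hα (mul_pos hlam (hpos x hx))
    have hL : ∀ x ∈ Ω, lap ψ x = -((α + lam * ψ x) ^ p) := fun x hx => by
      linarith [hpde x hx]
    refine ⟨mul_pos hc hα, ?_, ?_, ?_⟩
    · intro x hx
      rw [show lap (fun y => c * (α + lam * ψ y)) x = lap V x from rfl, lapV x,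
        max_eq_left (mul_nonneg hc.le (ht x hx).le),
        Real.mul_rpow hc.le (ht x hx).le, hclp, hL x hx]
      ring
    · intro x hx
      rw [hbd x hx]
      ring
    · rw [hdiv V hv2]
      have h1 : ∫ x in Ω, lap V x = ∫ x in Ω, (c * lam) * (-((α + lam * ψ x) ^ p)) :=
        setIntegral_congr_fun hΩo.measurableSet fun x hx => by rw [lapV x, hL x hx]
      rw [h1, integral_const_mul, integral_neg, hint, hI, ← hcl]
      ring
  · rintro ⟨hγ, hpde, hbd, hflux⟩
    have hα : 0 < α := by nlinarith
    have hIpos : (0:ℝ) < lam ^ q := rpow_pos_of_pos hlam _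
    have hψbd : ∀ x ∈ frontier Ω, ψ x = 0 := by
      intro x hx
      have h1 : c * (α + lam * ψ x) = c * α := hbd x hx
      have h2 : (c * lam) * ψ x = c * (α + lam * ψ x) - c * α := by ring
      rw [h1, sub_self] at h2
      rcases mul_eq_zero.mp h2 with h | h
      · exact absurd h (ne_of_gt hclam)
      · exact h
    rcases Nat.eq_zero_or_pos N with hN | hN
    · exfalso
      subst hN
      have hlap0 : ∀ (f : EN 0 → ℝ) (x : EN 0), lap f x = 0 := by
        intro f x
        simp [lap]
      rw [hdiv V hv2] at hflux
      have hz : ∫ x in Ω, lap V x = 0 := by simp [hlap0]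
      rw [hz, hI] at hflux
      linarith
    · have i₀ : Fin N := ⟨0, hN⟩
      have hsub : ∀ x ∈ Ω, lap V x ≤ 0 := by
        intro x hx
        have h1 := hpde x hx
        have h0 : 0 ≤ max (V x) 0 ^ p := rpow_nonneg (le_max_right _ _) p
        linarith
      have hwm := weak_min i₀ hΩo hΩb hv2 hsub hbd
      have hψ0 : ∀ x ∈ Ω, 0 ≤ ψ x := by
        intro x hx
        have h1 : c * α ≤ c * (α + lam * ψ x) := hwm x hx
        by_contra hψneg
        push_neg at hψneg
        have h2 : (c * lam) * ψ x < 0 := mul_neg_of_pos_of_neg hclam hψneg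
        nlinarith
      have hψpos : ∀ x ∈ Ω, 0 < ψ x := by
        intro x hx
        rcases lt_or_eq_of_le (hψ0 x hx) with h | h
        · exact h
        · exfalso
          have hVx : c * (α + lam * ψ x) = c * α := by
            rw [← h]
            ring
          have hloc : IsLocalMin V x := by
            refine Filter.eventually_of_mem (hΩo.mem_nhds hx) fun z hz => ?_
            show c * (α + lam * ψ x) ≤ c * (α + lam * ψ z)
            rw [hVx]
            exact hwm z hz
          have h0 := lap_nonneg_of_isLocalMin hv2 hloc
          have h1 := hpde x hx
          rw [hVx, max_eq_left (mul_pos hc hα).le] at h1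
          have h2 : 0 < (c * α) ^ p := rpow_pos_of_pos (mul_pos hc hα) p
          linarith
      have ht : ∀ x ∈ Ω, 0 < α + lam * ψ x := fun x hx =>
        add_pos hα (mul_pos hlam (hψpos x hx))
      have hlapψ : ∀ x ∈ Ω, lap ψ x = -((α + lam * ψ x) ^ p) := by
        intro x hx
        have h1 := hpde x hx
        rw [max_eq_left (mul_nonneg hc.le (ht x hx).le),
          Real.mul_rpow hc.le (ht x hx).le, hclp, lapV x] at h1
        have h2 : (c * lam) * lap ψ x = (c * lam) * (-((α + lam * ψ x) ^ p)) := by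
          linarith
        exact mul_left_cancel₀ (ne_of_gt hclam) h2
      have hint : ∫ x in Ω, (α + lam * ψ x) ^ p = 1 := by
        have h1 : ∫ x in Ω, lap V x = ∫ x in Ω, (c * lam) * (-((α + lam * ψ x) ^ p)) :=
          setIntegral_congr_fun hΩo.measurableSet fun x hx => by
            rw [lapV x, hlapψ x hx]
        rw [hdiv V hv2, h1, integral_const_mul, integral_neg, hI, ← hcl] at hflux
        have h2 : (c * lam) * ∫ x in Ω, (α + lam * ψ x) ^ p = (c * lam) * 1 := by
          linarith
        exact mul_left_cancel₀ (ne_of_gt hclam) h2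
      have hpdeψ : ∀ x ∈ Ω, -lap ψ x = (α + lam * ψ x) ^ p := by
        intro x hx
        rw [hlapψ x hx]
        ring
      exact ⟨hα, hpdeψ, hint, hψpos, hψbd⟩
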